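/- If the data vectors are pairwise uncorrelated in the sense that R2 = 2·Σ_{1≤i<l≤n} ⟨x_i, x_l⟩ = 0 (for example, if the x_i are pairwise orthogonal), and n ≥ 2, 1 ≤ k < d, and R1 = Σ_i ||x_i||² > 0, then the constant scaling function T ≡ 1 — which recovers the standard Rand-k estimator x̂ = (1/n)·(d/k)·Σ_i h_i — minimizes the mean squared error within the Rand-k-Spatial family: for every T : {1,…,n} → (0,∞), E[||x̂^{T≡1} − x̄||²] ≤ E[||x̂^{T} − x̄||²]. -/

import Mathlib

open Finset

noncomputable section

/-- A size-`k` subset of the coordinate set `{1,…,d}`. -/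
abbrev KSub (d k : ℕ) := {S : Finset (Fin d) // S.card = k}

/-- Sample space: each of the `n` nodes independently picks a uniformly random
size-`k` subset of coordinates. -/
abbrev Omega (n d k : ℕ) := Fin n → KSub d k

/-- Expectation with respect to the uniform distribution on `Omega n d k`
(each `n`-tuple of `k`-subsets has probability `1 / C(d,k)^n`). -/
def Exp {n d k : ℕ} (f : Omega n d k → ℝ) : ℝ :=
  (∑ ω : Omega n d k, f ω) / (Fintype.card (Omega n d k) : ℝ)

/-- The sparsified vector of node `i`: `h_{ij} = x_{ij}` if `j ∈ S_i`, else `0`. -/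
def spars {n d k : ℕ} (x : Fin n → Fin d → ℝ) (ω : Omega n d k) (i : Fin n) (j : Fin d) : ℝ :=
  if j ∈ (ω i).1 then x i j else 0

/-- The per-coordinate sampling probability `p = k/d`. -/
def pr (d k : ℕ) : ℝ := (k : ℝ) / (d : ℝ)

/-- `M_j`: the number of nodes that send coordinate `j`. -/
def Mcount {n d k : ℕ} (ω : Omega n d k) (j : Fin d) : ℕ :=
  (Finset.univ.filter fun i : Fin n => j ∈ (ω i).1).card

/-- The normalizing constant
`β̄ = ( Σ_{m=1}^n (p/T(m))·C(n−1,m−1)·p^{m−1}·(1−p)^{n−m} )⁻¹`. -/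
def betaBar (n d k : ℕ) (T : ℕ → ℝ) : ℝ :=
  (∑ m ∈ Finset.Icc 1 n,
      (pr d k / T m) * ((n - 1).choose (m - 1) : ℝ) * pr d k ^ (m - 1)
        * (1 - pr d k) ^ (n - m))⁻¹

/-- The Rand-k-Spatial estimate of coordinate `j` of the mean:
`x̂_j = (1/n)·(β̄/T(M_j))·Σᵢ h_{ij}` when `M_j ≥ 1`, and `x̂_j = 0` when `M_j = 0`. -/
def spatialEst {n d k : ℕ} (x : Fin n → Fin d → ℝ) (T : ℕ → ℝ) (ω : Omega n d k)
    (j : Fin d) : ℝ :=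
  if 1 ≤ Mcount ω j then
    (1 / (n : ℝ)) * (betaBar n d k T / T (Mcount ω j)) * ∑ i : Fin n, spars x ω i j
  else 0

/-- The mean squared error `E[‖x̂ᵀ − x̄‖²]` of the Rand-k-Spatial estimator with
scaling function `T`. -/
def mseSpatial (n d k : ℕ) (x : Fin n → Fin d → ℝ) (T : ℕ → ℝ) : ℝ :=
  Exp (fun ω : Omega n d k =>
    ∑ j : Fin d, (spatialEst x T ω j - (1 / (n : ℝ)) * ∑ i : Fin n, x i j) ^ 2)



lemma count_mem_powersetCard {γ : Type*} [DecidableEq γ] (u : Finset γ) (a : γ) (ha : a ∈ u)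
    (m : ℕ) :
    ((u.powersetCard (m+1)).filter (fun s => a ∈ s)).card = (u.card - 1).choose m := by
  rw [← Finset.card_erase_of_mem ha, ← Finset.card_powersetCard]
  refine Finset.card_bij' (fun s _ => s.erase a) (fun t _ => insert a t) ?_ ?_ ?_ ?_
  · intro s hs
    simp only [mem_filter, mem_powersetCard] at hs
    obtain ⟨⟨hsub, hcard⟩, hmem⟩ := hs
    simp only [mem_powersetCard]
    exact ⟨erase_subset_erase a hsub, by rw [card_erase_of_mem hmem, hcard]; rfl⟩
  · intro t ht
    simp only [mem_powersetCard] at ht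
    obtain ⟨hsub, hcard⟩ := ht
    have hat : a ∉ t := fun h => (mem_erase.1 (hsub h)).1 rfl
    simp only [mem_filter, mem_powersetCard]
    refine ⟨⟨?_, by rw [card_insert_of_notMem hat, hcard]⟩, mem_insert_self a t⟩
    intro y hy
    rcases mem_insert.1 hy with h | h
    · exact h ▸ ha
    · exact (erase_subset a u) (hsub h)
  · intro s hs
    simp only [mem_filter] at hs
    exact insert_erase hs.2
  · intro t ht
    simp only [mem_powersetCard] at ht
    exact erase_insert (fun h => (mem_erase.1 (ht.1 h)).1 rfl)

lemma sum_finset_by_card {γ : Type*} [Fintype γ] [DecidableEq γ] (F : Finset γ → ℝ) :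
    ∑ s : Finset γ, F s
      = ∑ m ∈ range (Fintype.card γ + 1), ∑ s ∈ (univ : Finset γ).powersetCard m, F s := by
  rw [← Finset.powerset_univ, Finset.powerset_card_disjiUnion]
  refine (Finset.sum_disjiUnion _ _ _).trans ?_
  simp [Finset.card_univ]




lemma sum_mem_single {γ : Type*} [Fintype γ] [DecidableEq γ] (f : ℕ → ℝ) (i : γ) :
    ∑ s : Finset γ, (if i ∈ s then f s.card else 0)
      = ∑ m ∈ Icc 1 (Fintype.card γ), ((Fintype.card γ - 1).choose (m-1) : ℝ) * f m := by
  rw [sum_finset_by_card]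
  have hg : ∀ m, ∑ s ∈ (univ : Finset γ).powersetCard (m+1), (if i ∈ s then f s.card else 0)
      = ((Fintype.card γ - 1).choose m : ℝ) * f (m+1) := by
    intro m
    rw [Finset.sum_ite, Finset.sum_const_zero, add_zero]
    have : ∀ s ∈ ((univ : Finset γ).powersetCard (m+1)).filter (fun s => i ∈ s),
        f s.card = f (m+1) := by
      intro s hs
      simp only [mem_filter, mem_powersetCard] at hs
      rw [hs.1.2]
    rw [Finset.sum_congr rfl this, Finset.sum_const,
      count_mem_powersetCard (univ : Finset γ) i (mem_univ i) m, Finset.card_univ,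
      nsmul_eq_mul]
  rw [Finset.sum_range_succ']
  have h0 : ∑ s ∈ (univ : Finset γ).powersetCard 0, (if i ∈ s then f s.card else 0) = 0 := by
    simp [Finset.powersetCard_zero]
  rw [h0, add_zero]
  rw [show Icc 1 (Fintype.card γ) = Ico 1 (Fintype.card γ + 1) from (by rw [Finset.Ico_add_one_right_eq_Icc]),
    Finset.sum_Ico_eq_sum_range]
  simp only [Nat.add_sub_cancel]
  refine Finset.sum_congr rfl fun m _ => ?_
  rw [hg m]
  norm_num [add_comm 1 m]

lemma sum_pair_symm {γ : Type*} [Fintype γ] [DecidableEq γ] (f : ℕ → ℝ) {i l i' l' : γ}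
    (h : i ≠ l) (h' : i' ≠ l') :
    ∑ s : Finset γ, (if i ∈ s ∧ l ∈ s then f s.card else 0)
      = ∑ s : Finset γ, (if i' ∈ s ∧ l' ∈ s then f s.card else 0) := by
  set σ1 := Equiv.swap i' i
  have h1 : σ1 l' ≠ i := by
    intro hc
    exact h' (σ1.injective (by rw [hc, Equiv.swap_apply_left]))
  set σ2 := Equiv.swap (σ1 l') l
  set σ := σ1.trans σ2
  have hσi : σ i' = i := by
    simp only [σ, Equiv.trans_apply, σ1, Equiv.swap_apply_left]
    exact Equiv.swap_apply_of_ne_of_ne h1.symm h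
  have hσl : σ l' = l := by
    simp only [σ, Equiv.trans_apply, σ2, Equiv.swap_apply_left]
  refine (Fintype.sum_equiv σ.finsetCongr
    (fun s => if i' ∈ s ∧ l' ∈ s then f s.card else 0)
    (fun s => if i ∈ s ∧ l ∈ s then f s.card else 0) ?_).symm
  intro s
  rw [Equiv.finsetCongr_apply, Finset.card_map]
  congr 1
  rw [Finset.mem_map_equiv, Finset.mem_map_equiv]
  have : σ.symm i = i' := by rw [← hσi, Equiv.symm_apply_apply]
  have h2 : σ.symm l = l' := by rw [← hσl, Equiv.symm_apply_apply]
  rw [this, h2]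



lemma card_KSub (d k : ℕ) : Fintype.card (KSub d k) = d.choose k := by
  rw [Fintype.card_finset_len, Fintype.card_fin]

lemma card_Omega (n d k : ℕ) : Fintype.card (Omega n d k) = (d.choose k)^n := by
  rw [Fintype.card_fun, card_KSub, Fintype.card_fin]

lemma card_Aj (d k : ℕ) (hk : 1 ≤ k) (j : Fin d) :
    ((univ : Finset (KSub d k)).filter (fun S => j ∈ S.1)).card = (d-1).choose (k-1) := by
  have hd : (univ.erase j).card = d - 1 := by rw [card_erase_of_mem (mem_univ j), card_univ, Fintype.card_fin]
  rw [← hd, ← Finset.card_powersetCard]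
  refine Finset.card_bij' (fun S _ => S.1.erase j)
    (fun t ht => (⟨insert j t, ?_⟩ : KSub d k)) ?_ ?_ ?_ ?_
  · simp only [mem_powersetCard] at ht
    have hjt : j ∉ t := fun h => (mem_erase.1 (ht.1 h)).1 rfl
    rw [card_insert_of_notMem hjt, ht.2, Nat.sub_add_cancel hk]
  · intro S hS
    simp only [mem_filter, mem_univ, true_and] at hS
    simp only [mem_powersetCard]
    constructor
    · intro y hy
      exact mem_erase.2 ⟨(mem_erase.1 hy).1, mem_univ y⟩
    · rw [card_erase_of_mem hS, S.2]
  · intro t ht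
    simp [mem_insert_self]
  · intro S hS
    simp only [mem_filter, mem_univ, true_and] at hS
    exact Subtype.ext (insert_erase hS)
  · intro t ht
    simp only [mem_powersetCard] at ht
    exact erase_insert (fun h => (mem_erase.1 (ht.1 h)).1 rfl)

lemma card_Bj (d k : ℕ) (j : Fin d) :
    ((univ : Finset (KSub d k)).filter (fun S => j ∉ S.1)).card = (d-1).choose k := by
  have hd : (univ.erase j).card = d - 1 := by rw [card_erase_of_mem (mem_univ j), card_univ, Fintype.card_fin]
  rw [← hd, ← Finset.card_powersetCard]
  refine Finset.card_bij' (fun S _ => S.1)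
    (fun t ht => (⟨t, (mem_powersetCard.1 ht).2⟩ : KSub d k)) ?_ ?_ ?_ ?_
  · intro S hS
    simp only [mem_filter, mem_univ, true_and] at hS
    simp only [mem_powersetCard]
    refine ⟨fun y hy => mem_erase.2 ⟨fun hc => hS (hc ▸ hy), mem_univ y⟩, S.2⟩
  · intro t ht
    simp only [mem_powersetCard] at ht
    simp only [mem_filter, mem_univ, true_and]
    exact fun h => (mem_erase.1 (ht.1 h)).1 rfl
  · intro S hS; rfl
  · intro t ht; rfl



lemma fiber_card (n d k : ℕ) (j : Fin d) (s : Finset (Fin n)) :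
    ((univ : Finset (Omega n d k)).filter
        (fun ω => (univ.filter fun i => j ∈ (ω i).1) = s)).card
      = ((univ : Finset (KSub d k)).filter (fun S => j ∈ S.1)).card ^ s.card
        * ((univ : Finset (KSub d k)).filter (fun S => j ∉ S.1)).card ^ (n - s.card) := by
  have hset : ((univ : Finset (Omega n d k)).filter
        (fun ω => (univ.filter fun i => j ∈ (ω i).1) = s))
      = Fintype.piFinset (fun i : Fin n =>
          if i ∈ s then (univ : Finset (KSub d k)).filter (fun S => j ∈ S.1)
          else (univ : Finset (KSub d k)).filter (fun S => j ∉ S.1)) := by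
    ext ω
    simp only [mem_filter, mem_univ, true_and, Fintype.mem_piFinset, Finset.ext_iff]
    constructor
    · intro h i
      have hiff : (j ∈ (ω i).1) ↔ i ∈ s := by simpa using h i
      by_cases his : i ∈ s
      · simp [his, hiff.mpr his]
      · have hj : j ∉ (ω i).1 := fun hc => his (hiff.mp hc)
        simp [his, hj]
    · intro h i
      by_cases his : i ∈ s
      · have := h i; simp only [his, if_true, mem_filter, mem_univ, true_and] at this
        simp [this, his]
      · have := h i; simp only [his, if_false, mem_filter, mem_univ, true_and] at this
        simp [this, his]
  rw [hset, Fintype.card_piFinset]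
  simp only [apply_ite Finset.card]
  rw [Finset.prod_ite, Finset.prod_const, Finset.prod_const]
  have h1 : univ.filter (fun i => i ∈ s) = s := by ext i; simp
  have h2 : (univ.filter (fun i => ¬ i ∈ s)).card = n - s.card := by
    have h3 := Finset.card_filter_add_card_filter_not (s := (univ : Finset (Fin n)))
      (p := fun i => i ∈ s)
    rw [h1, card_univ, Fintype.card_fin] at h3
    omega
  rw [h1, h2]




lemma pushforward (n d k : ℕ) (j : Fin d) (F : Finset (Fin n) → ℝ) :
    ∑ ω : Omega n d k, F (univ.filter fun i => j ∈ (ω i).1)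
      = ∑ s : Finset (Fin n),
          ((((univ : Finset (KSub d k)).filter (fun S => j ∈ S.1)).card ^ s.card
            * ((univ : Finset (KSub d k)).filter (fun S => j ∉ S.1)).card ^ (n - s.card) : ℕ) : ℝ)
            * F s := by
  have step1 : ∑ ω : Omega n d k, F (univ.filter fun i => j ∈ (ω i).1)
      = ∑ ω : Omega n d k, ∑ s : Finset (Fin n),
          if (univ.filter fun i => j ∈ (ω i).1) = s then F s else 0 := by
    refine Finset.sum_congr rfl fun ω _ => ?_
    rw [Finset.sum_ite_eq univ (univ.filter fun i => j ∈ (ω i).1) F, if_pos (mem_univ _)]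
  rw [step1, Finset.sum_comm]
  refine Finset.sum_congr rfl fun s _ => ?_
  rw [← Finset.sum_filter, Finset.sum_const, nsmul_eq_mul, fiber_card]




lemma expand_sum (n : ℕ) (w c : ℕ → ℝ) (y : Fin n → ℝ) (v : ℝ) {i0 i1 : Fin n}
    (h01 : i0 ≠ i1) :
    ∑ s : Finset (Fin n), w s.card * (c s.card * (∑ i ∈ s, y i) - v)^2
      = (∑ m ∈ Icc 1 n, ((n-1).choose (m-1) : ℝ) * (w m * (c m)^2)) * (∑ i, (y i)^2)
        + (∑ s : Finset (Fin n), if i0 ∈ s ∧ i1 ∈ s then w s.card * (c s.card)^2 else 0)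
            * ((∑ i, y i)^2 - ∑ i, (y i)^2)
        - 2 * v * (∑ m ∈ Icc 1 n, ((n-1).choose (m-1) : ℝ) * (w m * c m)) * (∑ i, y i)
        + v^2 * (∑ s : Finset (Fin n), w s.card) := by
  set D := ∑ m ∈ Icc 1 n, ((n-1).choose (m-1) : ℝ) * (w m * (c m)^2) with hD
  set L := ∑ m ∈ Icc 1 n, ((n-1).choose (m-1) : ℝ) * (w m * c m) with hL
  set K := ∑ s : Finset (Fin n), if i0 ∈ s ∧ i1 ∈ s then w s.card * (c s.card)^2 else 0 with hK
  have hsplit : ∀ s : Finset (Fin n),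
      w s.card * (c s.card * (∑ i ∈ s, y i) - v)^2
        = w s.card * (c s.card)^2 * (∑ i ∈ s, y i)^2
          - 2 * v * (w s.card * c s.card * (∑ i ∈ s, y i)) + v^2 * w s.card := by
    intro s; ring
  rw [Finset.sum_congr rfl (fun s _ => hsplit s)]
  rw [Finset.sum_add_distrib, Finset.sum_sub_distrib, ← Finset.mul_sum, ← Finset.mul_sum]
  -- rewrite ∑ i ∈ s, y i as sum over univ with indicator
  have hS : ∀ s : Finset (Fin n), (∑ i ∈ s, y i) = ∑ i : Fin n, (if i ∈ s then y i else 0) := by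
    intro s
    rw [Finset.sum_ite_mem, Finset.univ_inter]
  -- linear term
  have hlin : ∑ s : Finset (Fin n), w s.card * c s.card * (∑ i ∈ s, y i)
      = L * ∑ i, y i := by
    have : ∀ s : Finset (Fin n), w s.card * c s.card * (∑ i ∈ s, y i)
        = ∑ i : Fin n, (if i ∈ s then w s.card * c s.card else 0) * y i := by
      intro s
      rw [hS, Finset.mul_sum]
      refine Finset.sum_congr rfl fun i _ => ?_
      by_cases h : i ∈ s <;> simp [h]
    rw [Finset.sum_congr rfl (fun s _ => this s), Finset.sum_comm]
    rw [Finset.mul_sum]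
    refine Finset.sum_congr rfl fun i _ => ?_
    rw [← Finset.sum_mul]
    have := sum_mem_single (fun m => w m * c m) i
    simp only [Fintype.card_fin] at this
    rw [this, ← hL]
  -- quadratic term
  have hquad : ∑ s : Finset (Fin n), w s.card * (c s.card)^2 * (∑ i ∈ s, y i)^2
      = D * (∑ i, (y i)^2) + K * ((∑ i, y i)^2 - ∑ i, (y i)^2) := by
    have hsq : ∀ s : Finset (Fin n), w s.card * (c s.card)^2 * (∑ i ∈ s, y i)^2
        = ∑ i : Fin n, ∑ l : Fin n,
            (if i ∈ s ∧ l ∈ s then w s.card * (c s.card)^2 else 0) * (y i * y l) := by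
      intro s
      rw [hS, sq (∑ i : Fin n, (if i ∈ s then y i else 0)), Finset.sum_mul_sum,
        Finset.mul_sum]
      refine Finset.sum_congr rfl fun i _ => ?_
      rw [Finset.mul_sum]
      refine Finset.sum_congr rfl fun l _ => ?_
      by_cases hi : i ∈ s <;> by_cases hl : l ∈ s <;> simp [hi, hl] <;> ring
    rw [Finset.sum_congr rfl (fun s _ => hsq s), Finset.sum_comm]
    have hswap : ∀ i : Fin n, ∑ s : Finset (Fin n), ∑ l : Fin n,
        (if i ∈ s ∧ l ∈ s then w s.card * (c s.card)^2 else 0) * (y i * y l)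
        = ∑ l : Fin n, (∑ s : Finset (Fin n),
            (if i ∈ s ∧ l ∈ s then w s.card * (c s.card)^2 else 0)) * (y i * y l) := by
      intro i
      rw [Finset.sum_comm]
      exact Finset.sum_congr rfl fun l _ => (Finset.sum_mul _ _ _).symm
    rw [Finset.sum_congr rfl (fun i _ => hswap i)]
    have hP : ∀ i l : Fin n, (∑ s : Finset (Fin n),
        (if i ∈ s ∧ l ∈ s then w s.card * (c s.card)^2 else 0))
          = if i = l then D else K := by
      intro i l
      by_cases h : i = l
      · subst h
        rw [if_pos rfl, hD]
        have := sum_mem_single (fun m => w m * (c m)^2) i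
        simp only [Fintype.card_fin] at this
        rw [← this]
        exact Finset.sum_congr rfl fun s _ => by by_cases hi : i ∈ s <;> simp [hi]
      · rw [if_neg h, hK]
        exact sum_pair_symm (fun m => w m * (c m)^2) h h01
    have : ∀ i : Fin n, ∑ l : Fin n, (∑ s : Finset (Fin n),
        (if i ∈ s ∧ l ∈ s then w s.card * (c s.card)^2 else 0)) * (y i * y l)
        = K * (y i * ∑ l, y l) + (D - K) * (y i)^2 := by
      intro i
      rw [Finset.sum_congr rfl (fun l _ => by rw [hP i l])]
      have : ∀ l : Fin n, (if i = l then D else K) * (y i * y l)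
          = K * (y i * y l) + (if i = l then (D - K) * (y i)^2 else 0) := by
        intro l
        by_cases h : i = l
        · subst h; simp [sq]; ring
        · simp [h]
      rw [Finset.sum_congr rfl (fun l _ => this l), Finset.sum_add_distrib,
        Finset.sum_ite_eq univ i (fun _ => (D - K) * (y i)^2), if_pos (mem_univ i),
        ← Finset.mul_sum, ← Finset.mul_sum]
    rw [Finset.sum_congr rfl (fun i _ => this i), Finset.sum_add_distrib,
      ← Finset.mul_sum, ← Finset.mul_sum]
    have h2 : ∑ i : Fin n, (y i * ∑ l : Fin n, y l) = (∑ i, y i)^2 := by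
      rw [← Finset.sum_mul, sq]
    rw [h2]
    ring
  rw [hlin, hquad]
  ring



lemma binom_one (n : ℕ) (hn : 1 ≤ n) (p : ℝ) :
    ∑ m ∈ Icc 1 n, ((n-1).choose (m-1) : ℝ) * p^(m-1) * (1-p)^(n-m) = 1 := by
  have hrange : n - 1 + 1 = n := Nat.sub_add_cancel hn
  have h : ∑ r ∈ range n, p^r * (1-p)^(n-1-r) * ((n-1).choose r : ℝ) = 1 := by
    have h := add_pow p (1-p) (n-1)
    rw [add_sub_cancel, one_pow, hrange] at h
    exact h.symm
  rw [show Icc 1 n = Ico 1 (n+1) from (by rw [Finset.Ico_add_one_right_eq_Icc]),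
    Finset.sum_Ico_eq_sum_range]
  simp only [Nat.add_sub_cancel]
  refine Eq.trans (Finset.sum_congr rfl fun r hr => ?_) h
  have e1 : 1 + r - 1 = r := by omega
  have e2 : n - (1 + r) = n - 1 - r := by omega
  rw [e1, e2]
  ring

lemma key_ineq (n : ℕ) (hn : 1 ≤ n) (p : ℝ) (hp : 0 < p) (q y : ℕ → ℝ)
    (hq : ∀ m ∈ Icc 1 n, 0 ≤ q m) (hsum : ∑ m ∈ Icc 1 n, q m = p)
    (hlin : ∑ m ∈ Icc 1 n, q m * y m = 1/(n:ℝ)) :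
    1/((n:ℝ)^2 * p) ≤ ∑ m ∈ Icc 1 n, q m * (y m)^2 := by
  have cs := Finset.sum_mul_sq_le_sq_mul_sq (Icc 1 n)
    (fun m => Real.sqrt (q m)) (fun m => Real.sqrt (q m) * y m)
  have h1 : ∑ m ∈ Icc 1 n, Real.sqrt (q m) * (Real.sqrt (q m) * y m)
      = ∑ m ∈ Icc 1 n, q m * y m := by
    refine Finset.sum_congr rfl fun m hm => ?_
    rw [← mul_assoc, Real.mul_self_sqrt (hq m hm)]
  have h2 : ∑ m ∈ Icc 1 n, (Real.sqrt (q m))^2 = ∑ m ∈ Icc 1 n, q m :=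
    Finset.sum_congr rfl fun m hm => Real.sq_sqrt (hq m hm)
  have h3 : ∑ m ∈ Icc 1 n, (Real.sqrt (q m) * y m)^2 = ∑ m ∈ Icc 1 n, q m * (y m)^2 := by
    refine Finset.sum_congr rfl fun m hm => ?_
    rw [mul_pow, Real.sq_sqrt (hq m hm)]
  rw [h1, h2, h3, hlin, hsum] at cs
  have hn' : (0:ℝ) < n := by exact_mod_cast Nat.pos_of_ne_zero (by omega)
  have h4 : 1/(n:ℝ)^2 ≤ p * ∑ m ∈ Icc 1 n, q m * (y m)^2 := by
    rwa [div_pow, one_pow] at cs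
  rw [div_le_iff₀ (by positivity)]
  have h5 : (n:ℝ)^2 * (1/(n:ℝ)^2) = 1 := by field_simp
  calc (1:ℝ) = (n:ℝ)^2 * (1/(n:ℝ)^2) := h5.symm
  _ ≤ (n:ℝ)^2 * (p * ∑ m ∈ Icc 1 n, q m * (y m)^2) :=
      mul_le_mul_of_nonneg_left h4 (by positivity)
  _ = (∑ m ∈ Icc 1 n, q m * (y m)^2) * ((n:ℝ)^2 * p) := by ring

lemma A_real (d k : ℕ) (hk : 1 ≤ k) (hkd : k < d) :
    (((d-1).choose (k-1) : ℕ) : ℝ) = pr d k * (d.choose k : ℝ) := by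
  have hd : 1 ≤ d := by omega
  have hnat : d * (d-1).choose (k-1) = d.choose k * k := by
    have h := Nat.add_one_mul_choose_eq (d-1) (k-1)
    simp only [Nat.succ_eq_add_one, Nat.sub_add_cancel hd, Nat.sub_add_cancel hk] at h
    exact h
  have hd0 : (d:ℝ) ≠ 0 := by positivity
  rw [pr]
  field_simp
  have h := congrArg (fun t : ℕ => (t:ℝ)) hnat
  push_cast at h
  linarith [h]

lemma B_real (d k : ℕ) (hk : 1 ≤ k) (hkd : k < d) :
    (((d-1).choose k : ℕ) : ℝ) = (1 - pr d k) * (d.choose k : ℝ) := by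
  have hd : 1 ≤ d := by omega
  have hnat : d.choose k = (d-1).choose (k-1) + (d-1).choose k := by
    have h := Nat.choose_succ_succ (d-1) (k-1)
    simp only [Nat.succ_eq_add_one, Nat.sub_add_cancel hd, Nat.sub_add_cancel hk] at h
    rw [h]
  have h := congrArg (fun t : ℕ => (t:ℝ)) hnat
  push_cast at h
  rw [A_real d k hk hkd] at h
  linarith [h]







def wf (n d k : ℕ) : ℕ → ℝ := fun m =>
  (((d-1).choose (k-1) : ℕ) : ℝ)^m * (((d-1).choose k : ℕ) : ℝ)^(n-m)

def cf (n d k : ℕ) (T : ℕ → ℝ) : ℕ → ℝ := fun m =>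
  if 1 ≤ m then (1/(n:ℝ)) * (betaBar n d k T / T m) else 0

def uf (n d k : ℕ) : ℕ → ℝ := fun m =>
  ((n-1).choose (m-1) : ℝ) * pr d k ^ (m-1) * (1 - pr d k)^(n-m)

def Dc (n d k : ℕ) (T : ℕ → ℝ) : ℝ :=
  ∑ m ∈ Icc 1 n, ((n-1).choose (m-1) : ℝ) * (wf n d k m * (cf n d k T m)^2)

def Lc (n d k : ℕ) (T : ℕ → ℝ) : ℝ :=
  ∑ m ∈ Icc 1 n, ((n-1).choose (m-1) : ℝ) * (wf n d k m * cf n d k T m)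

variable {n d k : ℕ}

lemma hp_pos (hk : 1 ≤ k) (hkd : k < d) : 0 < pr d k := by
  have hd : (0:ℝ) < d := by exact_mod_cast (by omega : 0 < d)
  exact div_pos (by exact_mod_cast hk) hd

lemma hp_lt (hk : 1 ≤ k) (hkd : k < d) : pr d k < 1 := by
  have hd : (0:ℝ) < d := by exact_mod_cast (by omega : 0 < d)
  rw [pr, div_lt_one hd]
  exact_mod_cast hkd

lemma uf_pos (hn : 1 ≤ n) (hk : 1 ≤ k) (hkd : k < d) {m : ℕ} (hm : m ∈ Icc 1 n) :
    0 < uf n d k m := by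
  obtain ⟨h1, h2⟩ := mem_Icc.1 hm
  have hcho : 0 < ((n-1).choose (m-1) : ℝ) := by
    exact_mod_cast Nat.choose_pos (by omega)
  have hp := hp_pos hk hkd
  have hq : 0 < 1 - pr d k := by linarith [hp_lt hk hkd]
  unfold uf
  positivity

lemma wf_eq (hk : 1 ≤ k) (hkd : k < d) {m : ℕ} (hm : m ∈ Icc 1 n) :
    ((n-1).choose (m-1) : ℝ) * wf n d k m
      = (d.choose k : ℝ)^n * (pr d k * uf n d k m) := by
  obtain ⟨h1, h2⟩ := mem_Icc.1 hm
  unfold wf uf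
  rw [A_real d k hk hkd, B_real d k hk hkd, mul_pow, mul_pow]
  have hNp : (d.choose k:ℝ)^m * (d.choose k:ℝ)^(n-m) = (d.choose k:ℝ)^n := by
    rw [← pow_add]; congr 1; omega
  have hpm : pr d k ^ m = pr d k * pr d k^(m-1) := by
    rw [← pow_succ']; congr 1; omega
  calc ((n-1).choose (m-1) : ℝ) * (pr d k ^ m * (d.choose k:ℝ)^m
        * ((1 - pr d k)^(n-m) * (d.choose k:ℝ)^(n-m)))
      = ((d.choose k:ℝ)^m * (d.choose k:ℝ)^(n-m))
          * (((n-1).choose (m-1) : ℝ) * pr d k ^ m * (1 - pr d k)^(n-m)) := by ring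
  _ = _ := by rw [hNp, hpm]; ring

lemma beta_eq (T : ℕ → ℝ) :
    betaBar n d k T = (pr d k * ∑ m ∈ Icc 1 n, uf n d k m / T m)⁻¹ := by
  unfold betaBar
  congr 1
  rw [Finset.mul_sum]
  exact Finset.sum_congr rfl fun m _ => by unfold uf; ring

lemma sumUT_pos (hn : 1 ≤ n) (hk : 1 ≤ k) (hkd : k < d) {T : ℕ → ℝ}
    (hT : ∀ m ∈ Finset.Icc 1 n, 0 < T m) :
    0 < ∑ m ∈ Icc 1 n, uf n d k m / T m := by
  refine Finset.sum_pos (fun m hm => div_pos (uf_pos hn hk hkd hm) (hT m hm)) ?_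
  exact ⟨1, mem_Icc.2 ⟨le_refl 1, hn⟩⟩

lemma lin_val (hn : 1 ≤ n) (hk : 1 ≤ k) (hkd : k < d) {T : ℕ → ℝ}
    (hT : ∀ m ∈ Finset.Icc 1 n, 0 < T m) :
    ∑ m ∈ Icc 1 n, (pr d k * uf n d k m) * cf n d k T m = 1/(n:ℝ) := by
  have hS := sumUT_pos hn hk hkd hT
  have hp := hp_pos hk hkd
  have hterm : ∀ m ∈ Icc 1 n, (pr d k * uf n d k m) * cf n d k T m
      = (pr d k / (n:ℝ)) * (pr d k * ∑ m ∈ Icc 1 n, uf n d k m / T m)⁻¹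
          * (uf n d k m / T m) := by
    intro m hm
    have h1 : 1 ≤ m := (mem_Icc.1 hm).1
    unfold cf
    rw [if_pos h1, beta_eq]
    ring
  rw [Finset.sum_congr rfl hterm, ← Finset.mul_sum]
  have hn0 : ((n:ℝ)) ≠ 0 := by exact_mod_cast (by omega : n ≠ 0)
  field_simp

lemma lc_val (hn : 1 ≤ n) (hk : 1 ≤ k) (hkd : k < d) {T : ℕ → ℝ}
    (hT : ∀ m ∈ Finset.Icc 1 n, 0 < T m) :
    Lc n d k T = (d.choose k : ℝ)^n / n := by
  unfold Lc
  have : ∀ m ∈ Icc 1 n, ((n-1).choose (m-1) : ℝ) * (wf n d k m * cf n d k T m)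
      = (d.choose k : ℝ)^n * ((pr d k * uf n d k m) * cf n d k T m) := by
    intro m hm
    rw [← mul_assoc, wf_eq hk hkd hm]
    ring
  rw [Finset.sum_congr rfl this, ← Finset.mul_sum, lin_val hn hk hkd hT]
  ring

lemma dc_eq (hk : 1 ≤ k) (hkd : k < d) (T : ℕ → ℝ) :
    Dc n d k T = (d.choose k : ℝ)^n
      * ∑ m ∈ Icc 1 n, (pr d k * uf n d k m) * (cf n d k T m)^2 := by
  unfold Dc
  rw [Finset.mul_sum]
  refine Finset.sum_congr rfl fun m hm => ?_
  rw [← mul_assoc, wf_eq hk hkd hm]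
  ring

lemma q_sum (hn : 1 ≤ n) (hk : 1 ≤ k) (hkd : k < d) :
    ∑ m ∈ Icc 1 n, pr d k * uf n d k m = pr d k := by
  rw [← Finset.mul_sum]
  have : ∑ m ∈ Icc 1 n, uf n d k m = 1 := binom_one n hn (pr d k)
  rw [this, mul_one]

lemma dc_ge (hn : 1 ≤ n) (hk : 1 ≤ k) (hkd : k < d) {T : ℕ → ℝ}
    (hT : ∀ m ∈ Finset.Icc 1 n, 0 < T m) :
    (d.choose k : ℝ)^n * (1/((n:ℝ)^2 * pr d k)) ≤ Dc n d k T := by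
  rw [dc_eq hk hkd]
  refine mul_le_mul_of_nonneg_left ?_ (by positivity)
  exact key_ineq n hn (pr d k) (hp_pos hk hkd) (fun m => pr d k * uf n d k m)
    (cf n d k T) (fun m hm => le_of_lt (mul_pos (hp_pos hk hkd) (uf_pos hn hk hkd hm)))
    (q_sum hn hk hkd) (lin_val hn hk hkd hT)

lemma dc_one (hn : 1 ≤ n) (hk : 1 ≤ k) (hkd : k < d) :
    Dc n d k (fun _ => 1) = (d.choose k : ℝ)^n * (1/((n:ℝ)^2 * pr d k)) := by
  have hp := hp_pos hk hkd
  have hn0 : ((n:ℝ)) ≠ 0 := by exact_mod_cast (by omega : n ≠ 0)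
  have hβ : betaBar n d k (fun _ => 1) = (pr d k)⁻¹ := by
    rw [beta_eq]
    simp only [div_one]
    have hu : ∑ m ∈ Icc 1 n, uf n d k m = 1 := binom_one n hn (pr d k)
    rw [hu, mul_one]
  rw [dc_eq hk hkd]
  have hterm : ∀ m ∈ Icc 1 n, (pr d k * uf n d k m) * (cf n d k (fun _ => 1) m)^2
      = (1/((n:ℝ) * pr d k))^2 * pr d k * uf n d k m := by
    intro m hm
    have h1 : 1 ≤ m := (mem_Icc.1 hm).1
    unfold cf
    rw [if_pos h1, hβ]
    field_simp
    try ring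
  rw [Finset.sum_congr rfl hterm]
  have : ∑ m ∈ Icc 1 n, (1/((n:ℝ) * pr d k))^2 * pr d k * uf n d k m
      = (1/((n:ℝ) * pr d k))^2 * pr d k * ∑ m ∈ Icc 1 n, uf n d k m := by
    rw [Finset.mul_sum]
  have hu : ∑ m ∈ Icc 1 n, uf n d k m = 1 := binom_one n hn (pr d k)
  rw [this, hu, mul_one]
  congr 1
  field_simp

def Kc (n d k : ℕ) (T : ℕ → ℝ) (i0 i1 : Fin n) : ℝ :=
  ∑ s : Finset (Fin n), if i0 ∈ s ∧ i1 ∈ s then wf n d k s.card * (cf n d k T s.card)^2 else 0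

def Zc (n d k : ℕ) : ℝ := ∑ s : Finset (Fin n), wf n d k s.card

variable {n d k : ℕ}

lemma num_eq (hk : 1 ≤ k) (x : Fin n → Fin d → ℝ) (T : ℕ → ℝ)
    {i0 i1 : Fin n} (h01 : i0 ≠ i1) :
    (∑ ω : Omega n d k, ∑ j : Fin d,
        (spatialEst x T ω j - (1/(n:ℝ)) * ∑ i : Fin n, x i j)^2)
      = Dc n d k T * (∑ j : Fin d, ∑ i : Fin n, (x i j)^2)
        + Kc n d k T i0 i1
            * ((∑ j : Fin d, (∑ i : Fin n, x i j)^2) - ∑ j : Fin d, ∑ i : Fin n, (x i j)^2)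
        - 2/(n:ℝ) * Lc n d k T * (∑ j : Fin d, (∑ i : Fin n, x i j)^2)
        + Zc n d k / (n:ℝ)^2 * (∑ j : Fin d, (∑ i : Fin n, x i j)^2) := by
  rw [Finset.sum_comm]
  have hj : ∀ j : Fin d, (∑ ω : Omega n d k,
        (spatialEst x T ω j - (1/(n:ℝ)) * ∑ i : Fin n, x i j)^2)
      = Dc n d k T * (∑ i : Fin n, (x i j)^2)
        + Kc n d k T i0 i1 * ((∑ i : Fin n, x i j)^2 - ∑ i : Fin n, (x i j)^2)
        - 2 * ((1/(n:ℝ)) * ∑ i : Fin n, x i j) * Lc n d k T * (∑ i : Fin n, x i j)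
        + ((1/(n:ℝ)) * ∑ i : Fin n, x i j)^2 * Zc n d k := by
    intro j
    have hest : ∀ ω : Omega n d k, spatialEst x T ω j
        = cf n d k T ((univ.filter fun i : Fin n => j ∈ (ω i).1).card)
            * ∑ i ∈ univ.filter (fun i : Fin n => j ∈ (ω i).1), x i j := by
      intro ω
      have hsp : (∑ i : Fin n, spars x ω i j)
          = ∑ i ∈ univ.filter (fun i : Fin n => j ∈ (ω i).1), x i j := by
        rw [Finset.sum_filter]; rfl
      simp only [spatialEst, cf, Mcount]
      split_ifs with h
      · rw [hsp]; exact if_pos h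
      · rw [zero_mul]; exact if_neg h
    calc (∑ ω : Omega n d k, (spatialEst x T ω j - (1/(n:ℝ)) * ∑ i : Fin n, x i j)^2)
        = ∑ ω : Omega n d k,
            (fun s : Finset (Fin n) =>
              (cf n d k T s.card * (∑ i ∈ s, x i j) - (1/(n:ℝ)) * ∑ i : Fin n, x i j)^2)
              (univ.filter fun i : Fin n => j ∈ (ω i).1) := by
          refine Finset.sum_congr rfl fun ω _ => ?_
          dsimp only
          rw [hest ω]
      _ = ∑ s : Finset (Fin n),
            ((((univ : Finset (KSub d k)).filter (fun S => j ∈ S.1)).card ^ s.card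
              * ((univ : Finset (KSub d k)).filter (fun S => j ∉ S.1)).card ^ (n - s.card) : ℕ) : ℝ)
              * (cf n d k T s.card * (∑ i ∈ s, x i j) - (1/(n:ℝ)) * ∑ i : Fin n, x i j)^2 :=
          pushforward n d k j (fun s : Finset (Fin n) =>
            (cf n d k T s.card * (∑ i ∈ s, x i j) - (1/(n:ℝ)) * ∑ i : Fin n, x i j)^2)
      _ = ∑ s : Finset (Fin n), wf n d k s.card
            * (cf n d k T s.card * (∑ i ∈ s, x i j) - (1/(n:ℝ)) * ∑ i : Fin n, x i j)^2 := by
          refine Finset.sum_congr rfl fun s _ => ?_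
          rw [card_Aj d k hk j, card_Bj d k j]
          simp only [wf]
          push_cast
          ring
      _ = Dc n d k T * (∑ i : Fin n, (x i j)^2)
        + Kc n d k T i0 i1 * ((∑ i : Fin n, x i j)^2 - ∑ i : Fin n, (x i j)^2)
        - 2 * ((1/(n:ℝ)) * ∑ i : Fin n, x i j) * Lc n d k T * (∑ i : Fin n, x i j)
        + ((1/(n:ℝ)) * ∑ i : Fin n, x i j)^2 * Zc n d k := by
          rw [expand_sum n (wf n d k) (cf n d k T) (fun i => x i j)
            ((1/(n:ℝ)) * ∑ i : Fin n, x i j) h01]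
          rfl
  rw [Finset.sum_congr rfl (fun j _ => hj j)]
  have step : ∀ j : Fin d, Dc n d k T * (∑ i : Fin n, (x i j)^2)
        + Kc n d k T i0 i1 * ((∑ i : Fin n, x i j)^2 - ∑ i : Fin n, (x i j)^2)
        - 2 * ((1/(n:ℝ)) * ∑ i : Fin n, x i j) * Lc n d k T * (∑ i : Fin n, x i j)
        + ((1/(n:ℝ)) * ∑ i : Fin n, x i j)^2 * Zc n d k
      = Dc n d k T * (∑ i : Fin n, (x i j)^2)
        + Kc n d k T i0 i1 * ((∑ i : Fin n, x i j)^2 - ∑ i : Fin n, (x i j)^2)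
        - 2/(n:ℝ) * Lc n d k T * ((∑ i : Fin n, x i j)^2)
        + Zc n d k / (n:ℝ)^2 * ((∑ i : Fin n, x i j)^2) := by
    intro j; ring
  rw [Finset.sum_congr rfl (fun j _ => step j)]
  simp only [Finset.sum_add_distrib, Finset.sum_sub_distrib, ← Finset.mul_sum]

/-- Rand-k is optimal when the data is uncorrelated:
if `R₂ = 2 Σ_{i<l} ⟨xᵢ, xₗ⟩ = 0`, `n ≥ 2`, `1 ≤ k < d` and `R₁ > 0`, then the
constant scaling function `T ≡ 1` (the standard Rand-k estimator) minimizes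
the MSE within the Rand-k-Spatial family. -/
theorem randk_optimal_when_uncorrelated (n d k : ℕ) (hn : 2 ≤ n) (hk : 1 ≤ k)
    (hkd : k < d) (x : Fin n → Fin d → ℝ)
    (hR2 : (2 : ℝ) * ∑ i : Fin n, ∑ l : Fin n,
        (if i < l then ∑ j : Fin d, x i j * x l j else 0) = 0)
    (hR1 : 0 < ∑ i : Fin n, ∑ j : Fin d, x i j ^ 2) :
    ∀ T : ℕ → ℝ, (∀ m ∈ Finset.Icc 1 n, 0 < T m) →
      mseSpatial n d k x (fun _ => 1) ≤ mseSpatial n d k x T := by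
  intro T hT
  have hn1 : 1 ≤ n := by omega
  have hT1 : ∀ m ∈ Finset.Icc 1 n, 0 < ((fun _ => (1:ℝ)) m) := fun _ _ => one_pos
  set i0 : Fin n := ⟨0, by omega⟩ with hi0
  set i1 : Fin n := ⟨1, by omega⟩ with hi1
  have h01 : i0 ≠ i1 := by
    simp only [hi0, hi1, ne_eq, Fin.mk.injEq]
    omega
  -- P = R1
  have hPR : (∑ j : Fin d, (∑ i : Fin n, x i j)^2)
      = ∑ j : Fin d, ∑ i : Fin n, (x i j)^2 := by
    have R2' := hR2
    have hR2' : (∑ i : Fin n, ∑ l : Fin n,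
        (if i < l then ∑ j : Fin d, x i j * x l j else 0)) = 0 := by linarith
    have hPexp : (∑ j : Fin d, (∑ i : Fin n, x i j)^2)
        = ∑ i : Fin n, ∑ l : Fin n, ∑ j : Fin d, x i j * x l j := by
      have h1 : ∀ j : Fin d, (∑ i : Fin n, x i j)^2
          = ∑ i : Fin n, ∑ l : Fin n, x i j * x l j := fun j => by
        rw [sq, Finset.sum_mul_sum]
      rw [Finset.sum_congr rfl (fun j _ => h1 j), Finset.sum_comm]
      exact Finset.sum_congr rfl fun i _ => Finset.sum_comm
    have htri : ∀ i l : Fin n, (∑ j : Fin d, x i j * x l j)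
        = (if i < l then ∑ j : Fin d, x i j * x l j else 0)
          + (if l < i then ∑ j : Fin d, x i j * x l j else 0)
          + (if i = l then ∑ j : Fin d, x i j * x l j else 0) := by
      intro i l
      rcases lt_trichotomy i l with h | h | h
      · simp [h, asymm h, ne_of_lt h]
      · subst h; simp [lt_irrefl]
      · simp [h, asymm h, (ne_of_gt h)]
    rw [hPexp, Finset.sum_congr rfl (fun i _ =>
      Finset.sum_congr rfl (fun l _ => htri i l))]
    simp only [Finset.sum_add_distrib]
    have hsecond : (∑ i : Fin n, ∑ l : Fin n,
        (if l < i then ∑ j : Fin d, x i j * x l j else 0))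
        = ∑ i : Fin n, ∑ l : Fin n, (if i < l then ∑ j : Fin d, x i j * x l j else 0) := by
      rw [Finset.sum_comm]
      refine Finset.sum_congr rfl fun i _ => Finset.sum_congr rfl fun l _ => ?_
      congr 1
      exact Finset.sum_congr rfl fun j _ => mul_comm _ _
    have hdiag : (∑ i : Fin n, ∑ l : Fin n,
        (if i = l then ∑ j : Fin d, x i j * x l j else 0))
        = ∑ j : Fin d, ∑ i : Fin n, (x i j)^2 := by
      have h2 : ∀ i : Fin n, (∑ l : Fin n, (if i = l then ∑ j : Fin d, x i j * x l j else 0))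
          = ∑ j : Fin d, (x i j)^2 := by
        intro i
        rw [Finset.sum_ite_eq univ i (fun l => ∑ j : Fin d, x i j * x l j), if_pos (mem_univ i)]
        exact Finset.sum_congr rfl fun j _ => (sq (x i j)).symm
      rw [Finset.sum_congr rfl (fun i _ => h2 i), Finset.sum_comm]
    rw [hsecond, hdiag, hR2']
    ring
  -- main comparison
  unfold mseSpatial Exp
  have hcard : (0:ℝ) < (Fintype.card (Omega n d k) : ℝ) := by
    rw [card_Omega]
    have : 0 < (d.choose k)^n := Nat.pow_pos (Nat.choose_pos (le_of_lt hkd))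
    exact_mod_cast this
  rw [div_le_div_iff_of_pos_right hcard]
  rw [num_eq hk x T h01, num_eq hk x (fun _ => 1) h01, hPR, lc_val hn1 hk hkd hT,
    lc_val hn1 hk hkd hT1]
  simp only [sub_self, mul_zero, add_zero]
  have hD : Dc n d k (fun _ => 1) ≤ Dc n d k T := by
    rw [dc_one hn1 hk hkd]
    exact dc_ge hn1 hk hkd hT
  have hR1' : (0:ℝ) ≤ ∑ j : Fin d, ∑ i : Fin n, (x i j)^2 := by
    refine Finset.sum_nonneg fun j _ => Finset.sum_nonneg fun i _ => sq_nonneg _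
  nlinarith [mul_le_mul_of_nonneg_right hD hR1']
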